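/- Let X be a probability measure on ℝ, φ the standard normal density, a ∈ (0,1). Then E[sign(X - ay)·φ(y - X)] = 0 for a.e. y ∈ ℝ if and only if ∫ sign(x - y)·φ(y - x) dμ(x) = 0 for a.e. y ∈ ℝ, where μ(dx) = exp((1-a)x²/2) P_X(√a dx) is the pushforward of P_X under x ↦ x/√a reweighted by exp((1-a)x²/2). -/
import Mathlib

open MeasureTheory ProbabilityTheory Real
open scoped NNReal ENNReal

lemma my_measurable_sign : Measurable Real.sign := by
  unfold Real.sign
  exact Measurable.ite (measurableSet_lt measurable_id measurable_const) measurable_const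
    (Measurable.ite (measurableSet_lt measurable_const measurable_id) measurable_const
      measurable_const)

lemma my_sign_div_pos {c : ℝ} (hc : 0 < c) (x : ℝ) : Real.sign (x / c) = Real.sign x := by
  rcases lt_trichotomy x 0 with h | h | h
  · rw [Real.sign_of_neg h, Real.sign_of_neg (div_neg_of_neg_of_pos h hc)]
  · simp [h]
  · rw [Real.sign_of_pos h, Real.sign_of_pos (div_pos h hc)]

theorem equivalent_convolution_condition
    (P : Measure ℝ) [IsProbabilityMeasure P] (a : ℝ) (ha : 0 < a) (ha1 : a < 1) :
    (∀ᵐ y ∂(volume : Measure ℝ),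
        ∫ x, Real.sign (x - a * y) * gaussianPDFReal 0 1 (y - x) ∂P = 0) ↔
      (∀ᵐ y ∂(volume : Measure ℝ),
        ∫ x, Real.sign (x - y) * gaussianPDFReal 0 1 (y - x)
          ∂((Measure.map (fun x => x / Real.sqrt a) P).withDensity
              fun x => ENNReal.ofReal (Real.exp ((1 - a) * x ^ 2 / 2))) = 0) := by
  set c : ℝ := Real.sqrt a with hcdef
  have hc : 0 < c := Real.sqrt_pos.2 ha
  have hc2 : c ^ 2 = a := Real.sq_sqrt ha.le
  -- key pointwise identity rewriting the second integral
  have key : ∀ y : ℝ,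
      (∫ x, Real.sign (x - y) * gaussianPDFReal 0 1 (y - x)
          ∂((Measure.map (fun x => x / c) P).withDensity
              fun x => ENNReal.ofReal (Real.exp ((1 - a) * x ^ 2 / 2)))) =
        Real.exp ((1 - a) * y ^ 2 / (2 * a)) *
          ∫ x, Real.sign (x - a * (y / c)) * gaussianPDFReal 0 1 (y / c - x) ∂P := by
    intro y
    have hmeasd : Measurable fun x : ℝ => Real.toNNReal (Real.exp ((1 - a) * x ^ 2 / 2)) :=
      (Real.continuous_exp.comp (by continuity)).measurable.real_toNNReal
    have hinteg : Measurable fun x : ℝ =>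
        (Real.toNNReal (Real.exp ((1 - a) * x ^ 2 / 2)) : ℝ≥0) •
          (Real.sign (x - y) * gaussianPDFReal 0 1 (y - x)) := by
      apply Measurable.smul hmeasd
      exact ((my_measurable_sign.comp (measurable_id.sub measurable_const)).mul
        ((measurable_gaussianPDFReal 0 1).comp (measurable_const.sub measurable_id)))
    have hdens : (fun x : ℝ => ENNReal.ofReal (Real.exp ((1 - a) * x ^ 2 / 2))) =
        fun x : ℝ => ((Real.toNNReal (Real.exp ((1 - a) * x ^ 2 / 2)) : ℝ≥0) : ℝ≥0∞) := rfl
    rw [hdens, integral_withDensity_eq_integral_smul hmeasd,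
      integral_map (φ := fun x => x / c) (measurable_id.div_const c).aemeasurable
        hinteg.aestronglyMeasurable]
    rw [← integral_const_mul]
    apply integral_congr_ae
    filter_upwards with u
    simp only [NNReal.smul_def, Real.coe_toNNReal _ (Real.exp_nonneg _)]
    have hsign : Real.sign (u / c - y) = Real.sign (u - a * (y / c)) := by
      have h1 : u / c - y = (u - a * (y / c)) / c := by
        field_simp
        rw [← hc2]; ring
      rw [h1, my_sign_div_pos hc]
    rw [hsign]
    simp only [gaussianPDFReal, NNReal.coe_one, mul_one, smul_eq_mul, sub_zero]
    have hexp : rexp ((1 - a) * (u / c) ^ 2 / 2) * rexp (-(y - u / c) ^ 2 / 2) =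
        rexp ((1 - a) * y ^ 2 / (2 * a)) * rexp (-(y / c - u) ^ 2 / 2) := by
      rw [← Real.exp_add, ← Real.exp_add]
      congr 1
      have hcne : c ≠ 0 := hc.ne'
      rw [← hc2]
      field_simp
      ring
    linear_combination (Real.sign (u - a * (y / c)) * (√(2 * π))⁻¹) * hexp
  -- quasi measure preserving maps
  have qmp_div : Measure.QuasiMeasurePreserving (fun y : ℝ => y / c) volume volume := by
    refine ⟨measurable_id.div_const c, ?_⟩
    have : (fun y : ℝ => y / c) = fun y : ℝ => y * c⁻¹ := by
      funext y; rw [div_eq_mul_inv]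
    rw [this, Real.map_volume_mul_right (inv_ne_zero hc.ne')]
    exact Measure.smul_absolutelyContinuous
  have qmp_mul : Measure.QuasiMeasurePreserving (fun y : ℝ => y * c) volume volume := by
    refine ⟨measurable_id.mul_const c, ?_⟩
    rw [Real.map_volume_mul_right hc.ne']
    exact Measure.smul_absolutelyContinuous
  constructor
  · intro h
    filter_upwards [qmp_div.ae h] with y hy
    rw [key y, hy, mul_zero]
  · intro h
    have h'' : ∀ᵐ y ∂(volume : Measure ℝ),
        ∫ x, Real.sign (x - a * (y / c)) * gaussianPDFReal 0 1 (y / c - x) ∂P = 0 := by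
      filter_upwards [h] with y hy
      rw [key y] at hy
      exact (mul_eq_zero.mp hy).resolve_left (Real.exp_ne_zero _)
    filter_upwards [qmp_mul.ae h''] with z hz
    have hzc : z * c / c = z := mul_div_cancel_right₀ z hc.ne'
    rwa [hzc] at hz
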